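/- Let q > 2 be a prime power, γ a primitive element of F_{q^2}, and e_1, e_2, e_3 integers with gcd(q+1, e_3) = 1, gcd(q-1, e_2-e_1) = 1, e_3 ≡ e_1 + e_2 (mod q-1). The code C = { (a γ^{(q+1)i e_1} + b γ^{(q+1)i e_2} + Tr_{F_{q^2}/F_q}(c γ^{i e_3}))_{i=0}^{q^2-2} : a, b ∈ F_q, c ∈ F_{q^2} } is a linear code over F_q of length q^2 - 1, dimension 4, and minimum Hamming distance q(q-1) - 2. -/

import Mathlib

open Finset Polynomial

set_option maxHeartbeats 2000000

lemma copr_shift {x y z : ℤ} (h : IsCoprime x y) : IsCoprime x (y + x * z) := by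
  obtain ⟨u, v, huv⟩ := h
  exact ⟨u - v * z, v, by linear_combination huv⟩

lemma card_eval_zero_le {E : Type} [Field E] [Fintype E] [DecidableEq E]
    (P : Polynomial E) (hP : P ≠ 0) :
    ({y : E | P.eval y = 0} : Finset E).card ≤ P.natDegree := by
  have hsub : ({y : E | P.eval y = 0} : Finset E) ⊆ P.roots.toFinset := by
    intro y hy
    simp only [mem_filter, mem_univ, true_and] at hy
    simp [Multiset.mem_toFinset, mem_roots, hP, hy, IsRoot]
  calc ({y : E | P.eval y = 0} : Finset E).card ≤ P.roots.toFinset.card := card_le_card hsub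
    _ ≤ Multiset.card P.roots := Multiset.toFinset_card_le _
    _ ≤ P.natDegree := P.card_roots'

lemma frob_add {E : Type} [Field E] [Fintype E] (q p m : ℕ) (hp : p.Prime)
    (hq : q = p ^ m) (hE : Fintype.card E = q ^ 2) (x y : E) :
    (x + y) ^ q = x ^ q + y ^ q := by
  haveI : CharP E (ringChar E) := ringChar.charP E
  have hrprime : (ringChar E).Prime := CharP.char_is_prime E _
  obtain ⟨k, -, hcard⟩ := FiniteField.card E (ringChar E)
  have hdvd : ringChar E ∣ p ^ (m * 2) := by
    have : (ringChar E) ^ (k : ℕ) = p ^ (m * 2) := by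
      rw [← hcard, hE, hq, ← pow_mul]
    exact this ▸ dvd_pow_self _ k.pos.ne'
  have hrp : ringChar E = p := by
    have := hrprime.dvd_of_dvd_pow hdvd
    exact (Nat.prime_dvd_prime_iff_eq hrprime hp).mp this
  haveI : Fact p.Prime := ⟨hp⟩
  haveI : CharP E p := hrp ▸ (ringChar.charP E)
  rw [hq]
  exact add_pow_char_pow x y p m

/-- The codeword of `C_{((q+1)e₁,(q+1)e₂,e₃)}` associated with `(a,b,c) ∈ F_q × F_q × F_{q²}`:
`(a·γ^{(q+1)ie₁} + b·γ^{(q+1)ie₂} + Tr_{E/F}(c·γ^{ie₃}))_{i=0}^{q²-2}`, where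
`Tr_{E/F}(x) = x + x^q`. -/
def codeword (q : ℕ) (F E : Type) [Field F] [Field E] [Algebra F E]
    (γ : E) (e₁ e₂ e₃ : ℤ) (a b : F) (c : E) : Fin (q ^ 2 - 1) → E := fun i =>
  algebraMap F E a * γ ^ (((q : ℤ) + 1) * i * e₁) +
    algebraMap F E b * γ ^ (((q : ℤ) + 1) * i * e₂) +
    (c * γ ^ ((i : ℤ) * e₃) + (c * γ ^ ((i : ℤ) * e₃)) ^ q)

/-- Under the stated hypotheses, the code
`C = {(a·γ^{(q+1)ie₁} + b·γ^{(q+1)ie₂} + Tr_{E/F}(c·γ^{ie₃}))_i : a, b ∈ F_q, c ∈ F_{q²}}`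
is an `F_q`-linear code of length `q²-1`, dimension `4`, and minimum Hamming distance
`q(q-1)-2`. -/
theorem code_is_linear_dim4_mindist (q : ℕ) (hq : 2 < q)
    (hppow : ∃ (p n : ℕ), p.Prime ∧ 0 < n ∧ q = p ^ n)
    (F E : Type) [Field F] [Fintype F] [DecidableEq F] [Field E] [Fintype E] [DecidableEq E]
    [Algebra F E] (hF : Fintype.card F = q) (hE : Fintype.card E = q ^ 2)
    (γ : E) (hγ : ∀ x : E, x ≠ 0 → ∃ n : ℕ, γ ^ n = x)
    (e₁ e₂ e₃ : ℤ) (he₃ : Int.gcd (q + 1) e₃ = 1)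
    (he₁₂ : Int.gcd (q - 1) (e₂ - e₁) = 1) (hcong : ((q : ℤ) - 1) ∣ (e₃ - (e₁ + e₂))) :
    ∃ S : Submodule F (Fin (q ^ 2 - 1) → E),
      (S : Set (Fin (q ^ 2 - 1) → E)) =
          {v | ∃ (a b : F) (c : E), v = codeword q F E γ e₁ e₂ e₃ a b c} ∧
        Module.finrank F S = 4 ∧
        (∀ v ∈ S, v ≠ 0 → q * (q - 1) - 2 ≤ hammingNorm v) ∧
        (∃ v ∈ S, hammingNorm v = q * (q - 1) - 2) := by
  classical
  obtain ⟨p, m, hp, hm, hqpm⟩ := hppow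
  have hq3 : 3 ≤ q := hq
  have hq0 : q ≠ 0 := by omega
  have hq1 : q ≠ 1 := by omega
  have hqsq : 9 ≤ q ^ 2 := by nlinarith
  have h1q : 1 ≤ q ^ 2 := by omega
  have hN : ((q ^ 2 - 1 : ℕ) : ℤ) = (q:ℤ)^2 - 1 := by
    push_cast [Nat.cast_sub h1q]; ring
  have hfrob : ∀ x y : E, (x + y) ^ q = x ^ q + y ^ q := frob_add q p m hp hqpm hE
  have hfixF : ∀ s : F, (algebraMap F E s) ^ q = algebraMap F E s := by
    intro s
    rw [← map_pow]
    congr 1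
    rw [← hF]
    exact FiniteField.pow_card s
  -- γ is nonzero
  have hγ0 : γ ≠ 0 := by
    intro h0
    have hex : ∃ x : E, x ≠ 0 ∧ x ≠ 1 := by
      by_contra hc
      push_neg at hc
      have hsub : (univ : Finset E) ⊆ {0, 1} := by
        intro x _
        rcases eq_or_ne x 0 with h | h
        · simp [h]
        · simp [hc x h]
      have hcard := card_le_card hsub
      simp [Finset.card_univ, hE] at hcard
      have h2 : ({0, 1} : Finset E).card ≤ 2 := (card_insert_le _ _).trans (by simp)
      omega
    obtain ⟨x, hx0, hx1⟩ := hex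
    obtain ⟨k, hk⟩ := hγ x hx0
    rcases Nat.eq_zero_or_pos k with h | h
    · rw [h, h0, pow_zero] at hk; exact hx1 hk.symm
    · rw [h0, zero_pow h.ne'] at hk; exact hx0 hk.symm
  set u : Eˣ := Units.mk0 γ hγ0 with hu
  have huval : (u : E) = γ := rfl
  have hcardu : Fintype.card Eˣ = q ^ 2 - 1 := by
    rw [Fintype.card_units, hE]
  have hord : orderOf u = q ^ 2 - 1 := by
    rw [← hcardu, ← Nat.card_eq_fintype_card]
    apply orderOf_eq_card_of_forall_mem_zpowers
    intro w
    obtain ⟨k, hk⟩ := hγ (w : E) (Units.ne_zero w)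
    refine ⟨(k : ℤ), Units.ext ?_⟩
    push_cast
    rw [hu]
    simpa using hk
  have hupow : ∀ k l : ℤ, ((q:ℤ)^2 - 1) ∣ (k - l) → u ^ k = u ^ l := by
    intro k l hdvd
    have h1 : u ^ (k - l) = 1 := by
      apply orderOf_dvd_iff_zpow_eq_one.mp
      rw [hord, hN]
      exact hdvd
    rw [zpow_sub, mul_inv_eq_one] at h1
    exact h1
  obtain ⟨m₀, hm₀⟩ := hcong
  set e₃' : ℤ := e₃ - ((q:ℤ)+1)*e₁ with he₃'
  have hcopN : IsCoprime ((q:ℤ)^2 - 1) e₃' := by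
    have hcop1 : IsCoprime ((q:ℤ)+1) e₃' := by
      have h := copr_shift (z := -e₁) (Int.isCoprime_iff_gcd_eq_one.mpr he₃)
      have heq : e₃ + ((q:ℤ)+1) * (-e₁) = e₃' := by rw [he₃']; ring
      rwa [heq] at h
    have hcop2 : IsCoprime ((q:ℤ)-1) e₃' := by
      have h := copr_shift (z := m₀ - e₁) (Int.isCoprime_iff_gcd_eq_one.mpr he₁₂)
      have heq : (e₂ - e₁) + ((q:ℤ)-1) * (m₀ - e₁) = e₃' := by
        rw [he₃']; linear_combination -hm₀
      rwa [heq] at h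
    have h := hcop2.mul_left hcop1
    have heq : ((q:ℤ)-1) * ((q:ℤ)+1) = (q:ℤ)^2 - 1 := by ring
    rwa [heq] at h
  set g : Fin (q ^ 2 - 1) → Eˣ := fun i => u ^ ((i:ℤ) * e₃') with hg
  have hginj : Function.Injective g := by
    intro i j hij
    simp only [hg] at hij
    have h1 : u ^ ((i:ℤ) * e₃' - (j:ℤ) * e₃') = 1 := by
      rw [zpow_sub, hij, mul_inv_eq_one]
    have h2 := orderOf_dvd_iff_zpow_eq_one.mpr h1
    rw [hord, hN] at h2
    have h3 : ((q:ℤ)^2 - 1) ∣ ((i:ℤ) - (j:ℤ)) := by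
      have heq : ((i:ℤ) * e₃' - (j:ℤ) * e₃') = ((i:ℤ) - (j:ℤ)) * e₃' := by ring
      rw [heq] at h2
      exact hcopN.dvd_of_dvd_mul_right h2
    rw [← hN] at h3
    obtain ⟨t, ht⟩ := h3
    have hib : (i:ℕ) < q ^ 2 - 1 := i.isLt
    have hjb : (j:ℕ) < q ^ 2 - 1 := j.isLt
    have ht0 : t = 0 := by
      rcases lt_trichotomy t 0 with h | h | h
      · have : ((q^2-1:ℕ):ℤ) * t ≤ -((q^2-1:ℕ):ℤ) := by nlinarith [hN]
        omega
      · exact h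
      · have hge1 : ((q^2-1:ℕ):ℤ) ≥ 1 := by omega
        have : ((q^2-1:ℕ):ℤ) * t ≥ ((q^2-1:ℕ):ℤ) := by nlinarith
        omega
    rw [ht0, mul_zero, sub_eq_zero] at ht
    exact Fin.ext (by exact_mod_cast ht)
  have hgbij : Function.Bijective g := by
    refine (Fintype.bijective_iff_injective_and_card g).mpr ⟨hginj, ?_⟩
    rw [Fintype.card_fin, hcardu]
  -- the key factorization
  have key : ∀ (a b : F) (c : E) (i : Fin (q ^ 2 - 1)),
      codeword q F E γ e₁ e₂ e₃ a b c i
        = (u ^ (((q:ℤ)+1)*(i:ℤ)*e₁) : Eˣ) *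
          (algebraMap F E a + algebraMap F E b * ((g i : E))^(q+1)
            + (c * (g i : E) + (c * (g i : E))^q)) := by
    intro a b c i
    set t : ℤ := ((q:ℤ)+1)*(i:ℤ)*e₁ with hti
    set w : Eˣ := u ^ ((i:ℤ) * e₃') with hw
    have hBu : u ^ (((q:ℤ)+1)*(i:ℤ)*e₂) = u ^ t * w ^ (q+1 : ℕ) := by
      rw [hw, ← zpow_natCast, ← zpow_mul, ← zpow_add]
      apply hupow
      refine ⟨(i:ℤ)*(e₁ - m₀), ?_⟩
      push_cast
      rw [he₃', hti]
      linear_combination -((q:ℤ)+1)*(i:ℤ)*hm₀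
    have hCu : u ^ ((i:ℤ)*e₃) = u ^ t * w := by
      rw [hw, ← zpow_add]
      congr 1
      rw [hti, he₃']
      ring
    have hDu : (u ^ ((i:ℤ)*e₃)) ^ (q : ℕ) = u ^ t * w ^ (q : ℕ) := by
      rw [hw, ← zpow_natCast, ← zpow_mul, ← zpow_natCast (u ^ ((i:ℤ)*e₃')), ← zpow_mul,
        ← zpow_add]
      apply hupow
      refine ⟨(i:ℤ)*e₁, ?_⟩
      push_cast
      rw [he₃', hti]
      ring
    have hγz : ∀ z : ℤ, γ ^ z = ((u ^ z : Eˣ) : E) := fun z => by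
      rw [← huval, Units.val_zpow_eq_zpow_val]
    show algebraMap F E a * γ ^ t + algebraMap F E b * γ ^ (((q : ℤ) + 1) * i * e₂) +
        (c * γ ^ ((i : ℤ) * e₃) + (c * γ ^ ((i : ℤ) * e₃)) ^ q) = _
    rw [hγz t, hγz (((q : ℤ) + 1) * i * e₂), hγz ((i : ℤ) * e₃), hBu, hCu]
    push_cast [Units.val_mul, Units.val_pow_eq_pow_val]
    have hDE : ((u:E) ^ t * (w:E)) ^ q = (u:E) ^ t * ((w:E)) ^ q := by
      have h1 := congrArg (Units.val) hDu
      push_cast at h1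
      have h2 := congrArg (Units.val) hCu
      push_cast at h2
      rw [← h2]
      exact h1
    rw [mul_pow c, hDE]
    ring
  -- zero counting transfer
  have hcount : ∀ (a b : F) (c : E),
      ({i : Fin (q ^ 2 - 1) | codeword q F E γ e₁ e₂ e₃ a b c i = 0} : Finset _).card
        = ({y : E | y ≠ 0 ∧ algebraMap F E a + algebraMap F E b * y^(q+1)
            + (c * y + (c * y)^q) = 0} : Finset E).card := by
    intro a b c
    apply Finset.card_bij (fun i _ => ((g i : E)))
    · intro i hi
      simp only [mem_filter, mem_univ, true_and] at hi ⊢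
      refine ⟨Units.ne_zero _, ?_⟩
      rw [key a b c i] at hi
      rcases mul_eq_zero.mp hi with h | h
      · exact absurd h (Units.ne_zero _)
      · exact h
    · intro i _ j _ hij
      exact hginj (Units.ext hij)
    · intro y hy
      simp only [mem_filter, mem_univ, true_and] at hy
      obtain ⟨hy0, hyeq⟩ := hy
      obtain ⟨i, hi⟩ := hgbij.surjective (Units.mk0 y hy0)
      refine ⟨i, ?_, ?_⟩
      · simp only [mem_filter, mem_univ, true_and]
        rw [key a b c i, hi]
        simp only [Units.val_mk0]
        rw [hyeq, mul_zero]
      · rw [hi]; rfl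
  -- the upper bound on the number of zero coordinates
  have hbound : ∀ (a b : F) (c : E), ¬(a = 0 ∧ b = 0 ∧ c = 0) →
      ({y : E | y ≠ 0 ∧ algebraMap F E a + algebraMap F E b * y^(q+1)
          + (c * y + (c * y)^q) = 0} : Finset E).card ≤ q + 1 := by
    intro a b c h
    set A := algebraMap F E a with hA
    set B := algebraMap F E b with hB
    set P : Polynomial E := C A + C B * X^(q+1) + (C c * X + C (c^q) * X^q) with hP
    have heval : ∀ y : E, P.eval y = A + B * y^(q+1) + (c * y + (c * y)^q) := by
      intro y
      simp [hP, mul_pow]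
    have hsub : ({y : E | y ≠ 0 ∧ algebraMap F E a + algebraMap F E b * y^(q+1)
        + (c * y + (c * y)^q) = 0} : Finset E) ⊆ ({y : E | P.eval y = 0} : Finset E) := by
      intro y hy
      simp only [mem_filter, mem_univ, true_and] at hy ⊢
      rw [heval]
      exact hy.2
    by_cases hb : b ≠ 0
    · have hB0 : B ≠ 0 := by
        simp [hB, _root_.map_eq_zero, hb]
      have hco : P.coeff (q+1) = B := by
        rw [hP]
        simp only [coeff_add, ← C_pow, coeff_C_mul, coeff_C, coeff_X, coeff_X_pow]
        rw [if_neg (by omega : ¬ (q+1 = 0)), if_neg (by omega : ¬ (1 = q+1)),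
          if_neg (by omega : ¬ (q+1 = q))]
        simp
      have hPne : P ≠ 0 := fun h0 => hB0 (by rw [← hco, h0, coeff_zero])
      have hdeg : P.natDegree ≤ q + 1 := by
        apply natDegree_add_le_of_degree_le
        · apply natDegree_add_le_of_degree_le
          · exact (natDegree_C A).le.trans (by omega)
          · exact (natDegree_C_mul_le _ _).trans (by simp)
        · apply natDegree_add_le_of_degree_le
          · exact (natDegree_C_mul_le _ _).trans (by simp <;> omega)
          · exact (natDegree_C_mul_le _ _).trans (by simp <;> omega)
      calc _ ≤ ({y : E | P.eval y = 0} : Finset E).card := card_le_card hsub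
        _ ≤ P.natDegree := card_eval_zero_le P hPne
        _ ≤ q + 1 := hdeg
    · push_neg at hb
      have hB0 : B = 0 := by simp [hB, hb]
      by_cases hc : c ≠ 0
      · have hco : P.coeff q = c^q := by
          rw [hP, hB0, map_zero, zero_mul, add_zero]
          simp only [coeff_add, ← C_pow, coeff_C_mul, coeff_C, coeff_X, coeff_X_pow]
          rw [if_neg (by omega : ¬ (q = 0)), if_neg (by omega : ¬ (1 = q))]
          simp
        have hPne : P ≠ 0 := fun h0 => (pow_ne_zero q hc) (by rw [← hco, h0, coeff_zero])
        have hdeg : P.natDegree ≤ q := by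
          apply natDegree_add_le_of_degree_le
          · apply natDegree_add_le_of_degree_le
            · exact (natDegree_C A).le.trans (by omega)
            · rw [hB0, map_zero, zero_mul]; simp
          · apply natDegree_add_le_of_degree_le
            · exact (natDegree_C_mul_le _ _).trans (by simp <;> omega)
            · exact (natDegree_C_mul_le _ _).trans (by simp)
        calc _ ≤ ({y : E | P.eval y = 0} : Finset E).card := card_le_card hsub
          _ ≤ P.natDegree := card_eval_zero_le P hPne
          _ ≤ q + 1 := by omega
      · push_neg at hc
        have ha : a ≠ 0 := by
          intro ha0; exact h ⟨ha0, hb, hc⟩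
        have hempty : ({y : E | y ≠ 0 ∧ algebraMap F E a + algebraMap F E b * y^(q+1)
            + (c * y + (c * y)^q) = 0} : Finset E) = ∅ := by
          ext y
          simp only [mem_filter, mem_univ, true_and, notMem_empty, iff_false, not_and]
          intro hy0 heq0
          apply ha
          rw [hb, hc] at heq0
          simp [zero_pow hq0] at heq0
          exact heq0
        rw [hempty]
        simp
  -- the exact count for the codeword (-1, 1, 0)
  have hexact : ({y : E | y ≠ 0 ∧ algebraMap F E (-1 : F) + algebraMap F E (1 : F) * y^(q+1)
      + ((0:E) * y + ((0:E) * y)^q) = 0} : Finset E).card = q + 1 := by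
    have hset : ({y : E | y ≠ 0 ∧ algebraMap F E (-1 : F) + algebraMap F E (1 : F) * y^(q+1)
        + ((0:E) * y + ((0:E) * y)^q) = 0} : Finset E) = ({y : E | y^(q+1) = 1} : Finset E) := by
      ext y
      simp only [mem_filter, mem_univ, true_and, map_one, map_neg, zero_mul, one_mul,
        zero_pow hq0, add_zero]
      constructor
      · rintro ⟨-, h⟩
        linear_combination h
      · intro h
        refine ⟨?_, by rw [h]; ring⟩
        intro h0
        rw [h0, zero_pow (by omega : q + 1 ≠ 0)] at h
        exact zero_ne_one h
    rw [hset]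
    apply le_antisymm
    · have hPne : (X^(q+1) - C (1:E)) ≠ 0 := X_pow_sub_C_ne_zero (by omega) 1
      have hdeg : (X^(q+1) - C (1:E)).natDegree = q + 1 := natDegree_X_pow_sub_C
      have hsub : ({y : E | y^(q+1) = 1} : Finset E) ⊆
          ({y : E | (X^(q+1) - C (1:E)).eval y = 0} : Finset E) := by
        intro y hy
        simp only [mem_filter, mem_univ, true_and] at hy ⊢
        simp [hy, sub_eq_zero]
      exact (card_le_card hsub).trans ((card_eval_zero_le _ hPne).trans_eq hdeg)
    · have hle := Finset.card_le_card_of_injOn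
        (f := fun j : Fin (q+1) => ((u ^ (((q:ℤ)-1) * (j:ℤ)) : Eˣ) : E))
        (s := (univ : Finset (Fin (q+1))))
        (t := ({y : E | y^(q+1) = 1} : Finset E)) ?_ ?_
      · simpa using hle
      · intro j _
        simp only [Finset.mem_coe, mem_filter, mem_univ, true_and]
        have hcoe : ((u ^ (((q:ℤ)-1) * (j:ℤ)) : Eˣ) : E)^(q+1)
            = ((u ^ (((q:ℤ)-1) * (j:ℤ) * ((q:ℤ)+1)) : Eˣ) : E) := by
          push_cast [← zpow_natCast, ← zpow_mul]
          norm_cast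
        rw [hcoe]
        have h0 : u ^ (((q:ℤ)-1) * (j:ℤ) * ((q:ℤ)+1)) = u ^ (0:ℤ) := by
          apply hupow
          exact ⟨(j:ℤ), by ring⟩
        rw [h0]
        simp
      · intro j _ k _ hjk
        simp only at hjk
        have hjk' : u ^ (((q:ℤ)-1) * (j:ℤ)) = u ^ (((q:ℤ)-1) * (k:ℤ)) := Units.ext hjk
        have h1 : u ^ (((q:ℤ)-1) * (j:ℤ) - ((q:ℤ)-1) * (k:ℤ)) = 1 := by
          rw [zpow_sub, hjk', mul_inv_eq_one]
        have h2 := orderOf_dvd_iff_zpow_eq_one.mpr h1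
        rw [hord, hN] at h2
        have hq1' : ((q:ℤ) - 1) ≠ 0 := by
          have : (3:ℤ) ≤ (q:ℤ) := by exact_mod_cast hq3
          omega
        have h3 : ((q:ℤ)+1) ∣ ((j:ℤ) - (k:ℤ)) := by
          have heq : ((q:ℤ)^2 - 1) = ((q:ℤ)-1) * ((q:ℤ)+1) := by ring
          have heq2 : (((q:ℤ)-1) * (j:ℤ) - ((q:ℤ)-1) * (k:ℤ))
              = ((q:ℤ)-1) * ((j:ℤ) - (k:ℤ)) := by ring
          rw [heq, heq2] at h2
          exact (mul_dvd_mul_iff_left hq1').mp h2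
        obtain ⟨t, ht⟩ := h3
        have hjb : (j:ℤ) < (q:ℤ)+1 := by exact_mod_cast j.isLt
        have hkb : (k:ℤ) < (q:ℤ)+1 := by exact_mod_cast k.isLt
        have hj0 : (0:ℤ) ≤ (j:ℤ) := Int.natCast_nonneg _
        have hk0 : (0:ℤ) ≤ (k:ℤ) := Int.natCast_nonneg _
        have ht0 : t = 0 := by
          rcases lt_trichotomy t 0 with h | h | h
          · nlinarith
          · exact h
          · nlinarith
        rw [ht0, mul_zero, sub_eq_zero] at ht
        exact Fin.ext (by exact_mod_cast ht)
  -- hamming norm and zero coordinates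
  have hsplit : ∀ v : Fin (q ^ 2 - 1) → E,
      hammingNorm v + ({i : Fin (q ^ 2 - 1) | v i = 0} : Finset _).card = q ^ 2 - 1 := by
    intro v
    rw [hammingNorm]
    have hfil := Finset.card_filter_add_card_filter_not
      (s := (univ : Finset (Fin (q ^ 2 - 1)))) (p := fun i => v i ≠ 0)
    simp only [not_not] at hfil
    rw [hfil]
    simp
  -- the linear map
  set Φ : (F × F × E) →ₗ[F] (Fin (q ^ 2 - 1) → E) :=
    { toFun := fun t => codeword q F E γ e₁ e₂ e₃ t.1 t.2.1 t.2.2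
      map_add' := by
        intro s t
        funext i
        simp only [codeword, Pi.add_apply, Prod.fst_add, Prod.snd_add, map_add]
        rw [add_mul (s.2.2) (t.2.2), hfrob]
        ring
      map_smul' := by
        intro s t
        funext i
        show codeword q F E γ e₁ e₂ e₃ (s • t.1) (s • t.2.1) (s • t.2.2) i
          = s • (codeword q F E γ e₁ e₂ e₃ t.1 t.2.1 t.2.2 i)
        simp only [codeword, Algebra.smul_def, map_mul, smul_eq_mul, Algebra.algebraMap_self,
          RingHom.id_apply]
        rw [mul_assoc (algebraMap F E s) t.2.2 (γ ^ ((i:ℤ) * e₃)), mul_pow, hfixF]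
        ring } with hΦ
  have hΦapp : ∀ a b c, Φ (a, b, c) = codeword q F E γ e₁ e₂ e₃ a b c := fun _ _ _ => rfl
  -- key numeric fact
  have hlt : q + 1 < q ^ 2 - 1 := by nlinarith
  -- injectivity of Φ
  have hΦinj : Function.Injective Φ := by
    rw [injective_iff_map_eq_zero]
    rintro ⟨a, b, c⟩ h0
    by_contra hne
    have habc : ¬(a = 0 ∧ b = 0 ∧ c = 0) := by
      intro ⟨h1, h2, h3⟩
      exact hne (by simp [Prod.ext_iff, h1, h2, h3])
    have hall : ({i : Fin (q ^ 2 - 1) | codeword q F E γ e₁ e₂ e₃ a b c i = 0}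
        : Finset _) = univ := by
      ext i
      simp only [mem_filter, mem_univ, true_and, iff_true]
      have := congrFun h0 i
      rw [hΦapp] at this
      exact this
    have hcard := hcount a b c
    rw [hall] at hcard
    simp only [Finset.card_univ, Fintype.card_fin] at hcard
    have := hbound a b c habc
    omega
  refine ⟨LinearMap.range Φ, ?_, ?_, ?_, ?_⟩
  · ext v
    simp only [SetLike.mem_coe, LinearMap.mem_range, Set.mem_setOf_eq]
    constructor
    · rintro ⟨⟨a, b, c⟩, rfl⟩
      exact ⟨a, b, c, (hΦapp a b c).symm⟩
    · rintro ⟨a, b, c, rfl⟩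
      exact ⟨(a, b, c), hΦapp a b c⟩
  · rw [LinearMap.finrank_range_of_inj hΦinj]
    have hcard4 : Fintype.card (F × F × E) = q ^ 4 := by
      simp [Fintype.card_prod, hF, hE]
      ring
    have hfr := Module.card_eq_pow_finrank (K := F) (V := F × F × E)
    rw [hF, hcard4] at hfr
    exact (Nat.pow_right_injective (by omega) hfr.symm)
  · rintro v ⟨⟨a, b, c⟩, rfl⟩ hv0
    have habc : ¬(a = 0 ∧ b = 0 ∧ c = 0) := by
      intro ⟨h1, h2, h3⟩
      apply hv0
      have : ((a, b, c) : F × F × E) = 0 := by simp [Prod.ext_iff, h1, h2, h3]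
      rw [this, map_zero]
    have hsp := hsplit (Φ (a, b, c))
    have hcard : ({i : Fin (q ^ 2 - 1) | Φ (a, b, c) i = 0} : Finset _).card ≤ q + 1 := by
      have h1 : ({i : Fin (q ^ 2 - 1) | Φ (a, b, c) i = 0} : Finset _)
          = ({i : Fin (q ^ 2 - 1) | codeword q F E γ e₁ e₂ e₃ a b c i = 0} : Finset _) := by
        ext i
        rw [hΦapp]
      rw [h1, hcount a b c]
      exact hbound a b c habc
    have hqq : q * (q - 1) = q * q - q := by
      cases q with
      | zero => simp
      | succ k => rw [Nat.succ_sub_one, Nat.mul_succ, Nat.add_sub_cancel]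
    obtain ⟨M, hM⟩ : ∃ M, M = q * q := ⟨_, rfl⟩
    have hq2 : q ^ 2 = M := by rw [hM, sq]
    have hgoal : q * (q - 1) = M - q := by rw [hqq, ← hM]
    set W := hammingNorm (Φ (a, b, c)) with hW
    set Zc := ({i : Fin (q ^ 2 - 1) | Φ (a, b, c) i = 0} : Finset _).card with hZcc
    have hsp' : W + Zc = q ^ 2 - 1 := hsp
    have hcard' : Zc ≤ q + 1 := hcard
    rw [hq2] at hsp'
    have hqsq' : 9 ≤ M := by omega
    rw [hgoal]
    omega
  · refine ⟨Φ (-1, 1, 0), ⟨(-1, 1, 0), rfl⟩, ?_⟩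
    have hsp := hsplit (Φ (-1, 1, 0))
    have hcard : ({i : Fin (q ^ 2 - 1) | Φ (-1, 1, 0) i = 0} : Finset _).card = q + 1 := by
      have h1 : ({i : Fin (q ^ 2 - 1) | Φ (-1, 1, 0) i = 0} : Finset _)
          = ({i : Fin (q ^ 2 - 1) |
              codeword q F E γ e₁ e₂ e₃ (-1 : F) (1 : F) (0 : E) i = 0} : Finset _) := by
        ext i
        rw [hΦapp]
      rw [h1, hcount (-1) 1 0]
      exact hexact
    have hqq : q * (q - 1) = q * q - q := by
      cases q with
      | zero => simp
      | succ k => rw [Nat.succ_sub_one, Nat.mul_succ, Nat.add_sub_cancel]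
    obtain ⟨M, hM⟩ : ∃ M, M = q * q := ⟨_, rfl⟩
    have hq2 : q ^ 2 = M := by rw [hM, sq]
    have hgoal : q * (q - 1) = M - q := by rw [hqq, ← hM]
    set W := hammingNorm (Φ (-1, 1, 0)) with hW
    set Zc := ({i : Fin (q ^ 2 - 1) | Φ (-1, 1, 0) i = 0} : Finset _).card with hZcc
    have hsp' : W + Zc = q ^ 2 - 1 := hsp
    have hcard' : Zc = q + 1 := hcard
    rw [hq2] at hsp'
    have hqsq' : 9 ≤ M := by omega
    have hlt' : q + 1 < M - 1 := by
      have := hlt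
      rw [hq2] at this
      exact this
    rw [hgoal]
    omega
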